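/- For a nonempty partition λ of n with q columns (i.e., λ_1 = q) and more than one row, and any integer e ≥ 2, setting s so that s/e = 1 − (2/(en))Σ_{b∈λ} ct(b) (equivalently c_λ = 0 for (λ,∅)), the quantity d + (q−1)c with c = 1/e, d = 1/2 − (2/(en))Σ ct(b) is strictly greater than 1/2. -/

import Mathlib

/-- A partition given as a weakly decreasing list of positive integers. -/
def IsPartition (l : List ℕ) : Prop :=
  l.Pairwise (· ≥ ·) ∧ ∀ x ∈ l, 0 < x

/-- Sum of contents `y - x` over the boxes of the Young diagram of `l`
(boxes in row `x+1` are `(x+1, y+1)` for `y < l[x]`, content `y - x`). -/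
def contentSum (l : List ℕ) : ℤ :=
  ∑ x ∈ Finset.range l.length, ∑ y ∈ Finset.range (l.getD x 0), ((y : ℤ) - (x : ℤ))

lemma sum_getD_eq (l : List ℕ) : ∑ x ∈ Finset.range l.length, l.getD x 0 = l.sum := by
  induction l with
  | nil => simp
  | cons a t ih =>
    rw [List.length_cons, Finset.sum_range_succ', List.sum_cons, ← ih]
    simp [add_comm]

lemma gauss (m : ℕ) (x : ℤ) : 2 * ∑ y ∈ Finset.range m, ((y : ℤ) - x) = m * (m - 1) - 2 * x * m := by
  induction m with
  | zero => simp
  | succ k ih =>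
    rw [Finset.sum_range_succ, mul_add, ih]
    push_cast; ring

lemma key (l : List ℕ) (h : IsPartition l) (hne : l ≠ []) (n q : ℕ)
    (hn : l.sum = n) (hq : l.head hne = q) (hrows : 1 < l.length) :
    2 * contentSum l < (n : ℤ) * ((q : ℤ) - 1) := by
  have h0 : 0 < l.length := List.length_pos_iff.mpr hne
  have hhead : l.head hne = l.get ⟨0, h0⟩ := (List.get_mk_zero h0).symm ▸ rfl
  have hle : ∀ x (hx : x < l.length), l.getD x 0 ≤ q := by
    intro x hx
    rw [List.getD_eq_getElem l 0 hx, ← hq, hhead]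
    rcases Nat.eq_zero_or_pos x with hx0 | hx0
    · subst hx0; rfl
    · exact List.pairwise_iff_get.mp h.1 ⟨0, h0⟩ ⟨x, hx⟩ hx0
  -- bound each row
  have hrow : ∀ x ∈ Finset.range l.length,
      2 * ∑ y ∈ Finset.range (l.getD x 0), ((y : ℤ) - (x : ℤ)) ≤
        (l.getD x 0 : ℤ) * ((q : ℤ) - 1) - 2 * (x : ℤ) * (l.getD x 0 : ℤ) := by
    intro x hx
    rw [gauss]
    have h1 : ((l.getD x 0 : ℤ) - 1) ≤ (q : ℤ) - 1 := by
      have := hle x (Finset.mem_range.mp hx); omega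
    nlinarith [Int.ofNat_nonneg (l.getD x 0)]
  have hsum : 2 * contentSum l ≤
      ∑ x ∈ Finset.range l.length, ((l.getD x 0 : ℤ) * ((q : ℤ) - 1) - 2 * (x : ℤ) * (l.getD x 0 : ℤ)) := by
    rw [contentSum, Finset.mul_sum]
    exact Finset.sum_le_sum hrow
  have hsplit : ∑ x ∈ Finset.range l.length, ((l.getD x 0 : ℤ) * ((q : ℤ) - 1) - 2 * (x : ℤ) * (l.getD x 0 : ℤ))
      = (n : ℤ) * ((q : ℤ) - 1) - 2 * ∑ x ∈ Finset.range l.length, (x : ℤ) * (l.getD x 0 : ℤ) := by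
    have e1 : ∑ x ∈ Finset.range l.length, (l.getD x 0 : ℤ) * ((q : ℤ) - 1)
        = (n : ℤ) * ((q : ℤ) - 1) := by
      rw [← Finset.sum_mul]
      congr 1
      rw [← hn, ← sum_getD_eq l]
      push_cast; rfl
    have e2 : ∑ x ∈ Finset.range l.length, 2 * (x : ℤ) * (l.getD x 0 : ℤ)
        = 2 * ∑ x ∈ Finset.range l.length, (x : ℤ) * (l.getD x 0 : ℤ) := by
      rw [Finset.mul_sum]
      exact Finset.sum_congr rfl fun i _ => by ring
    rw [Finset.sum_sub_distrib, e1, e2]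
  -- the x = 1 term is ≥ 1
  have h1mem : (1 : ℕ) ∈ Finset.range l.length := Finset.mem_range.mpr hrows
  have hpos1 : (1 : ℤ) ≤ (1 : ℤ) * (l.getD 1 0 : ℤ) := by
    have : l.getD 1 0 ∈ l := by
      rw [List.getD_eq_getElem l 0 hrows]; exact List.getElem_mem _
    have := h.2 _ this
    push_cast; omega
  have htail : (1 : ℤ) ≤ ∑ x ∈ Finset.range l.length, (x : ℤ) * (l.getD x 0 : ℤ) := by
    calc (1 : ℤ) ≤ (1 : ℤ) * (l.getD 1 0 : ℤ) := hpos1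
    _ ≤ _ := by
        apply Finset.single_le_sum (f := fun x : ℕ => (x : ℤ) * (l.getD x 0 : ℤ)) _ h1mem
        intro i _
        positivity
  omega


/-- For a nonempty partition of n with largest part q and more than one row,
with c = 1/e and d = 1/2 - (2/(en))Σ ct(b), one has d + (q-1)c > 1/2. -/
theorem stmt8 (l : List ℕ) (h : IsPartition l) (hne : l ≠ []) (n q : ℕ)
    (hn : l.sum = n) (hq : l.head hne = q) (hrows : 1 < l.length)
    (e : ℤ) (he : 2 ≤ e) :
    (1/2 - 2 / ((e : ℚ) * (n : ℚ)) * (contentSum l : ℚ)) +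
      ((q : ℚ) - 1) * (1 / (e : ℚ)) > 1/2 := by
  have hkey := key l h hne n q hn hq hrows
  have hn0 : 0 < n := by
    rcases l with _ | ⟨a, t⟩
    · exact absurd rfl hne
    · have := h.2 a (List.mem_cons_self (a := a) (l := t))
      simp [List.sum_cons] at hn; omega
  have hnQ : (0 : ℚ) < (n : ℚ) := by exact_mod_cast hn0
  have heQ : (0 : ℚ) < (e : ℚ) := by exact_mod_cast (by omega : (0:ℤ) < e)
  have hkeyQ : 2 * (contentSum l : ℚ) < (n : ℚ) * ((q : ℚ) - 1) := by
    exact_mod_cast hkey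
  rw [gt_iff_lt, ← sub_pos]
  have heq : (1/2 - 2 / ((e : ℚ) * (n : ℚ)) * (contentSum l : ℚ)) +
      ((q : ℚ) - 1) * (1 / (e : ℚ)) - 1/2
      = ((n : ℚ) * ((q : ℚ) - 1) - 2 * (contentSum l : ℚ)) / ((e : ℚ) * (n : ℚ)) := by
    field_simp
    ring
  rw [heq]
  apply div_pos (by linarith) (by positivity)
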